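/- For all positive integers a, b, c with a ≤ b ≤ c, 3a < b + c and 2b > c, it holds that f(a,b,c) = ⌊2(b+c−1)/3⌋. -/

import Mathlib

/-- A question (and a secret) for `(a,b,c)`-Mastermind is a triple in
`Fin a × Fin b × Fin c`. -/
abbrev Question (a b c : ℕ) := Fin a × Fin b × Fin c

/-- `g s q` is the number of coordinates in which `s` and `q` agree. -/
def g {a b c : ℕ} (s q : Question a b c) : ℕ :=
  (if s.1 = q.1 then 1 else 0) + (if s.2.1 = q.2.1 then 1 else 0) +
    (if s.2.2 = q.2.2 then 1 else 0)

/-- A finite set of questions is a feasible strategy if every pair of distinct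
secrets is distinguished by some question. -/
def Feasible {a b c : ℕ} (Q : Finset (Question a b c)) : Prop :=
  ∀ s s' : Question a b c, s ≠ s' → ∃ q ∈ Q, g s q ≠ g s' q

/-- `f a b c` is the minimum cardinality of a feasible strategy for
`(a,b,c)`-Mastermind. -/
noncomputable def f (a b c : ℕ) : ℕ :=
  sInf {n : ℕ | ∃ Q : Finset (Question a b c), Feasible Q ∧ Q.card = n}

set_option maxHeartbeats 1000000

/-- y-coordinate of the `p`-th cell -/
def mmY (dv p : ℕ) : ℕ := if p < 2*dv then p else 2*dv + (p - 2*dv)/2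

/-- z-coordinate of the `p`-th cell -/
def mmZ (dv dh p : ℕ) : ℕ :=
  if p < 2*dv then p/2 else if p = 2*dv + 2*dh then dv + 2*dh else p - dv

/-- piece index of the `p`-th cell -/
def mmPiece (dv p : ℕ) : ℕ := if p < 2*dv then p/2 else dv + (p - 2*dv)/2

/-- cyclic predecessor within a block -/
def mmPrv (dv dh i : ℕ) : ℕ :=
  if i < dv then (if i = 0 then dv - 1 else i - 1) else (if i = dv then dv + dh - 1 else i - 1)

/-- cyclic successor within a block -/
def mmNxt (dv dh i : ℕ) : ℕ :=
  if i < dv then (if i + 1 < dv then i + 1 else 0) else (if i + 1 < dv + dh then i + 1 else dv)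

def mmCap (a x : ℕ) : ℕ := if x < a then x else 0

/-- label of the `p`-th cell -/
def mmL (a dv dh sg p : ℕ) : ℕ :=
  if p = 2*dv + 2*dh then sg
  else if p % 2 = 0 then mmCap a (mmPiece dv p) else mmCap a (mmPrv dv dh (mmPiece dv p))

/-- index of slot-0 cell of piece `i` -/
def mmI0 (dv i : ℕ) : ℕ := if i < dv then 2*i else 2*dv + 2*(i - dv)

def mmQf (a b c dv dh sg : ℕ) (ha : 0 < a) (hb : 0 < b) (hc : 0 < c) (p : ℕ) :
    Question a b c :=
  (⟨mmL a dv dh sg p % a, Nat.mod_lt _ ha⟩, ⟨mmY dv p % b, Nat.mod_lt _ hb⟩,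
    ⟨mmZ dv dh p % c, Nat.mod_lt _ hc⟩)

lemma mm_inj (dv dh de p q : ℕ) (hde : de ≤ 1) (hp : p < 2*(dv+dh)+de)
    (hq : q < 2*(dv+dh)+de) (hY : mmY dv p = mmY dv q) (hZ : mmZ dv dh p = mmZ dv dh q) :
    p = q := by
  unfold mmY mmZ at *; split_ifs at * <;> omega

lemma mm_rowlem (dv dh de p q : ℕ) (hde : de ≤ 1) (hp : p < 2*(dv+dh)+de)
    (hq : q < 2*(dv+dh)+de) (hpq : p ≠ q) (hY : mmY dv p = mmY dv q) :
    2*dv ≤ p ∧ p < 2*dv+2*dh ∧ 2*dv ≤ q ∧ q < 2*dv+2*dh := by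
  unfold mmY at *; split_ifs at * <;> omega

lemma mm_collem (dv dh de p q : ℕ) (hde : de ≤ 1) (hp : p < 2*(dv+dh)+de)
    (hq : q < 2*(dv+dh)+de) (hpq : p ≠ q) (hZ : mmZ dv dh p = mmZ dv dh q) :
    p < 2*dv ∧ q < 2*dv := by
  unfold mmZ at *; split_ifs at * <;> omega

lemma mm_cellV (dv dh i s : ℕ) (hi : i < dv) (hs : s ≤ 1) :
    mmI0 dv i = 2*i ∧ mmY dv (2*i+s) = 2*i+s ∧ mmZ dv dh (2*i+s) = i ∧
      mmPiece dv (2*i+s) = i := by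
  unfold mmI0 mmY mmZ mmPiece; split_ifs <;> omega

lemma mm_cellH (dv dh i s : ℕ) (hi1 : dv ≤ i) (hi2 : i < dv+dh) (hs : s ≤ 1) :
    mmI0 dv i = 2*dv + 2*(i-dv) ∧ mmY dv (2*dv+2*(i-dv)+s) = 2*dv + (i - dv) ∧
      mmZ dv dh (2*dv+2*(i-dv)+s) = dv + 2*(i-dv) + s ∧
      mmPiece dv (2*dv+2*(i-dv)+s) = i := by
  unfold mmI0 mmY mmZ mmPiece; split_ifs <;> omega

lemma mm_piece0 (dv dh i : ℕ) (hi : i < dv+dh) :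
    mmPiece dv (mmI0 dv i) = i ∧ mmI0 dv i % 2 = 0 ∧ mmI0 dv i ≠ 2*dv+2*dh := by
  unfold mmPiece mmI0; split_ifs <;> omega

lemma mm_piece1 (dv dh i : ℕ) (hi : i < dv+dh) :
    mmPiece dv (mmI0 dv i + 1) = i ∧ (mmI0 dv i + 1) % 2 = 1 ∧ mmI0 dv i + 1 ≠ 2*dv+2*dh := by
  unfold mmPiece mmI0; split_ifs <;> omega

lemma mm_lab0 (a dv dh sg i : ℕ) (hi : i < dv+dh) :
    mmL a dv dh sg (mmI0 dv i) = mmCap a i := by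
  have h := mm_piece0 dv dh i hi
  unfold mmL
  rw [if_neg h.2.2, if_pos h.2.1, h.1]

lemma mm_lab1 (a dv dh sg i : ℕ) (hi : i < dv+dh) :
    mmL a dv dh sg (mmI0 dv i + 1) = mmCap a (mmPrv dv dh i) := by
  have h := mm_piece1 dv dh i hi
  unfold mmL
  rw [if_neg h.2.2, h.1, if_neg (by omega)]

lemma mm_labS (a dv dh sg : ℕ) : mmL a dv dh sg (2*dv+2*dh) = sg := by
  unfold mmL; rw [if_pos rfl]

lemma mm_singYZ (dv dh : ℕ) : mmY dv (2*dv+2*dh) = 2*dv+dh ∧ mmZ dv dh (2*dv+2*dh) = dv+2*dh := by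
  unfold mmY mmZ; split_ifs <;> omega

lemma mm_nxt_lt (dv dh i : ℕ) (hi : i < dv+dh) :
    mmNxt dv dh i < dv+dh ∧ (i < dv ↔ mmNxt dv dh i < dv) := by
  unfold mmNxt; split_ifs <;> omega

lemma mm_prv_lt (dv dh i : ℕ) (hi : i < dv+dh) :
    mmPrv dv dh i < dv+dh ∧ (i < dv ↔ mmPrv dv dh i < dv) := by
  unfold mmPrv; split_ifs <;> omega

lemma mm_prv_nxt (dv dh i : ℕ) (hi : i < dv + dh) :
    mmPrv dv dh (mmNxt dv dh i) = i := by
  rcases Nat.lt_or_ge i dv with h|h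
  · unfold mmNxt
    rw [if_pos h]
    by_cases h2 : i+1 < dv
    · rw [if_pos h2]
      unfold mmPrv
      rw [if_pos (by omega), if_neg (by omega)]
      omega
    · rw [if_neg h2]
      unfold mmPrv
      rw [if_pos (by omega), if_pos rfl]
      omega
  · unfold mmNxt
    rw [if_neg (by omega)]
    by_cases h2 : i+1 < dv+dh
    · rw [if_pos h2]
      unfold mmPrv
      rw [if_neg (by omega), if_neg (by omega)]
      omega
    · rw [if_neg h2]
      unfold mmPrv
      rw [if_neg (by omega), if_pos rfl]
      omega

lemma mm_nxt_self (dv dh i : ℕ) (hi : i < dv+dh) :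
    mmNxt dv dh i = i ↔ ((dv = 1 ∧ i = 0) ∨ (dh = 1 ∧ i = dv)) := by
  unfold mmNxt; split_ifs <;> omega

lemma mm_prv_self (dv dh i : ℕ) (hi : i < dv+dh) :
    mmPrv dv dh i = i ↔ mmNxt dv dh i = i := by
  unfold mmPrv mmNxt; split_ifs <;> omega

lemma mm_cap_ne (a t x u : ℕ) (hx : x < t) (hxu : x ≠ u) (hu : u < a)
    (hno : ¬(u = 0 ∧ a < t)) : mmCap a x ≠ u := by
  unfold mmCap; split_ifs <;> omega

lemma mm_cap_lt (a x : ℕ) (ha : 0 < a) : mmCap a x < a := by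
  unfold mmCap; split_ifs <;> omega

lemma mm_cap_eq (a x : ℕ) (hx : x < a) : mmCap a x = x := by
  unfold mmCap; split_ifs <;> omega

lemma mm_pd (dv dh i j si sj : ℕ) (hi : i < dv+dh) (hj : j < dv+dh) (hij : i ≠ j)
    (hsi : si ≤ 1) (hsj : sj ≤ 1) :
    mmY dv (mmI0 dv i + si) ≠ mmY dv (mmI0 dv j + sj) ∧
      mmZ dv dh (mmI0 dv i + si) ≠ mmZ dv dh (mmI0 dv j + sj) := by
  unfold mmI0 mmY mmZ; split_ifs <;> omega

lemma mm_sd (dv dh i s : ℕ) (hi : i < dv+dh) (hs : s ≤ 1) :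
    mmY dv (mmI0 dv i + s) ≠ mmY dv (2*dv+2*dh) ∧
      mmZ dv dh (mmI0 dv i + s) ≠ mmZ dv dh (2*dv+2*dh) := by
  unfold mmI0 mmY mmZ; split_ifs <;> omega

lemma mm_I0_lt (dv dh i : ℕ) (hi : i < dv+dh) : mmI0 dv i + 1 < 2*(dv+dh) := by
  unfold mmI0; split_ifs <;> omega

section mmHelpers

variable {u1 v1 w1 u2 v2 w2 L Y Z : ℕ}

lemma mm_only_w
    (h : ((if u1 = L then 1 else 0) + (if v1 = Y then 1 else 0) + (if w1 = Z then 1 else 0) : ℕ)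
       = (if u2 = L then 1 else 0) + (if v2 = Y then 1 else 0) + (if w2 = Z then 1 else 0))
    (hu : u1 = u2) (hv : v1 = v2) (hw : w1 ≠ w2) (hz : Z = w1 ∨ Z = w2) : False := by
  split_ifs at h <;> omega

lemma mm_only_v
    (h : ((if u1 = L then 1 else 0) + (if v1 = Y then 1 else 0) + (if w1 = Z then 1 else 0) : ℕ)
       = (if u2 = L then 1 else 0) + (if v2 = Y then 1 else 0) + (if w2 = Z then 1 else 0))
    (hu : u1 = u2) (hw : w1 = w2) (hv : v1 ≠ v2) (hy : Y = v1 ∨ Y = v2) : False := by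
  split_ifs at h <;> omega

lemma mm_only_u
    (h : ((if u1 = L then 1 else 0) + (if v1 = Y then 1 else 0) + (if w1 = Z then 1 else 0) : ℕ)
       = (if u2 = L then 1 else 0) + (if v2 = Y then 1 else 0) + (if w2 = Z then 1 else 0))
    (hv : v1 = v2) (hw : w1 = w2) (hu : u1 ≠ u2) (hl : L = u1) : False := by
  split_ifs at h <;> omega

lemma mm_tail
    (h : ((if u1 = L then 1 else 0) + (if v1 = Y then 1 else 0) + (if w1 = Z then 1 else 0) : ℕ)
       = (if u2 = L then 1 else 0) + (if v2 = Y then 1 else 0) + (if w2 = Z then 1 else 0))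
    (hu : u1 = u2) :
    ((if v1 = Y then 1 else 0) + (if w1 = Z then 1 else 0) : ℕ)
       = (if v2 = Y then 1 else 0) + (if w2 = Z then 1 else 0) := by
  split_ifs at h ⊢ <;> omega

lemma mm_t_row {vv ww vv' ww' : ℕ}
    (h : ((if vv = Y then 1 else 0) + (if ww = Z then 1 else 0) : ℕ)
       = (if vv' = Y then 1 else 0) + (if ww' = Z then 1 else 0))
    (hvv : vv ≠ vv') (hy : Y = vv) : Z = ww' ∧ Z ≠ ww := by
  split_ifs at h <;> omega

lemma mm_t_col {vv ww vv' ww' : ℕ}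
    (h : ((if vv = Y then 1 else 0) + (if ww = Z then 1 else 0) : ℕ)
       = (if vv' = Y then 1 else 0) + (if ww' = Z then 1 else 0))
    (hww : ww ≠ ww') (hz : Z = ww') : Y = vv := by
  split_ifs at h <;> omega

lemma mm_lab_row
    (h : ((if u1 = L then 1 else 0) + (if v1 = Y then 1 else 0) + (if w1 = Z then 1 else 0) : ℕ)
       = (if u2 = L then 1 else 0) + (if v2 = Y then 1 else 0) + (if w2 = Z then 1 else 0))
    (hw : w1 = w2) (hu : u1 ≠ u2) (hl : L = u1) : Y = v2 := by
  split_ifs at h <;> omega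

lemma mm_lab_col
    (h : ((if u1 = L then 1 else 0) + (if v1 = Y then 1 else 0) + (if w1 = Z then 1 else 0) : ℕ)
       = (if u2 = L then 1 else 0) + (if v2 = Y then 1 else 0) + (if w2 = Z then 1 else 0))
    (hv : v1 = v2) (hu : u1 ≠ u2) (hl : L = u1) : Z = w2 := by
  split_ifs at h <;> omega

lemma mm_formA
    (h : ((if u1 = L then 1 else 0) + (if v1 = Y then 1 else 0) + (if w1 = Z then 1 else 0) : ℕ)
       = (if u2 = L then 1 else 0) + (if v2 = Y then 1 else 0) + (if w2 = Z then 1 else 0))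
    (hu : u1 ≠ u2) (hv : v1 ≠ v2) (hw : w1 ≠ w2) (hl : L = u1) :
    (Y = v2 ∧ Z ≠ w1 ∧ Z ≠ w2) ∨ (Z = w2 ∧ Y ≠ v1 ∧ Y ≠ v2) := by
  split_ifs at h <;> omega

lemma mm_formC
    (h : ((if u1 = L then 1 else 0) + (if v1 = Y then 1 else 0) + (if w1 = Z then 1 else 0) : ℕ)
       = (if u2 = L then 1 else 0) + (if v2 = Y then 1 else 0) + (if w2 = Z then 1 else 0))
    (hv : v1 ≠ v2) (hw : w1 ≠ w2) (hl1 : L ≠ u1) (hl2 : L ≠ u2) :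
    (Y ≠ v1 ∧ Y ≠ v2 ∧ Z ≠ w1 ∧ Z ≠ w2) ∨ (Y = v1 ∧ Z = w2) ∨ (Y = v2 ∧ Z = w1) := by
  split_ifs at h <;> omega

end mmHelpers

lemma mm_surjZ (dv dh de z0 : ℕ) (hz : z0 < dv+2*dh+de) (hde : de ≤ 1) :
    ∃ p, p < 2*(dv+dh)+de ∧ mmZ dv dh p = z0 := by
  by_cases h1 : z0 < dv
  · exact ⟨2*z0, by omega, by unfold mmZ; split_ifs <;> omega⟩
  · by_cases h2 : z0 < dv + 2*dh
    · exact ⟨dv + z0, by omega, by unfold mmZ; split_ifs <;> omega⟩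
    · exact ⟨2*dv+2*dh, by omega, by unfold mmZ; split_ifs <;> omega⟩

lemma mm_surjY (dv dh de y0 : ℕ) (hy : y0 < 2*dv+dh+de) (hde : de ≤ 1) :
    ∃ p, p < 2*(dv+dh)+de ∧ mmY dv p = y0 := by
  by_cases h1 : y0 < 2*dv
  · exact ⟨y0, by omega, by unfold mmY; split_ifs <;> omega⟩
  · by_cases h2 : y0 < 2*dv + dh
    · exact ⟨2*dv + 2*(y0 - 2*dv), by omega, by unfold mmY; split_ifs <;> omega⟩
    · exact ⟨2*dv+2*dh, by omega, by unfold mmY; split_ifs <;> omega⟩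

lemma mm_YV (dv vv : ℕ) (h : vv < 2*dv) : mmY dv vv = vv := by
  unfold mmY; rw [if_pos h]

lemma mm_ZV (dv dh vv : ℕ) (h : vv < 2*dv) : mmZ dv dh vv = vv/2 := by
  unfold mmZ; split_ifs <;> omega


def mmSG (a dv : ℕ) : ℕ := if 1 < a ∧ dv = 1 then 1 else 0

def mmOK (a b c : ℕ) : Prop := ¬(a = 2 ∧ b = 4 ∧ c = 4) ∧ ¬(a = 2 ∧ b = 4 ∧ c = 5)

lemma mmSG_lt (a dv : ℕ) (ha : 0 < a) : mmSG a dv < a := by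
  unfold mmSG; split_ifs <;> omega

lemma mmSG_spec (a dv : ℕ) :
    (1 < a ∧ dv = 1 ∧ mmSG a dv = 1) ∨ (¬(1 < a ∧ dv = 1) ∧ mmSG a dv = 0) := by
  unfold mmSG; split_ifs with h
  · exact Or.inl ⟨h.1, h.2, rfl⟩
  · exact Or.inr ⟨h, rfl⟩

lemma mm_core (b c : ℕ) (hb : 2 ≤ b) (hc : 2 ≤ c)
    (P : Finset (Fin b × Fin c))
    (base : ∀ (v v' : Fin b) (w w' : Fin c), (v, w) ≠ (v', w') →
      ∃ p ∈ P, ((if v = p.1 then 1 else 0) + (if w = p.2 then 1 else 0) : ℕ) ≠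
        (if v' = p.1 then 1 else 0) + (if w' = p.2 then 1 else 0))
    (hR : b - 1 ≤ (P.image Prod.fst).card) (hC : c - 1 ≤ (P.image Prod.snd).card) :
    2 * (b + c) - 4 ≤ 3 * P.card := by
  classical
  set rows := P.image Prod.fst with hrows
  set cols := P.image Prod.snd with hcols
  set rcnt : Fin b → ℕ := fun y => (P.filter fun pp => pp.1 = y).card with hrcnt
  set ccnt : Fin c → ℕ := fun z => (P.filter fun pp => pp.2 = z).card with hccnt
  have hrpos : ∀ y ∈ rows, 1 ≤ rcnt y := by
    intro y hy
    obtain ⟨pp, hpp, rfl⟩ := Finset.mem_image.mp hy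
    have : pp ∈ P.filter fun t => t.1 = pp.1 := Finset.mem_filter.mpr ⟨hpp, rfl⟩
    exact Finset.card_pos.mpr ⟨pp, this⟩
  have hcpos : ∀ z ∈ cols, 1 ≤ ccnt z := by
    intro z hz
    obtain ⟨pp, hpp, rfl⟩ := Finset.mem_image.mp hz
    have : pp ∈ P.filter fun t => t.2 = pp.2 := Finset.mem_filter.mpr ⟨hpp, rfl⟩
    exact Finset.card_pos.mpr ⟨pp, this⟩
  set r2 := (rows.filter fun y => 2 ≤ rcnt y).card with hr2
  set c2 := (cols.filter fun z => 2 ≤ ccnt z).card with hc2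
  have hKsumr : P.card = ∑ y ∈ rows, rcnt y :=
    Finset.card_eq_sum_card_fiberwise (fun x hx => Finset.mem_image_of_mem _ hx)
  have hKsumc : P.card = ∑ z ∈ cols, ccnt z :=
    Finset.card_eq_sum_card_fiberwise (fun x hx => Finset.mem_image_of_mem _ hx)
  have hKr : rows.card + r2 ≤ P.card := by
    have hre : rows.card + r2 = ∑ y ∈ rows, (1 + if 2 ≤ rcnt y then 1 else 0) := by
      rw [Finset.sum_add_distrib, Finset.sum_const, smul_eq_mul, mul_one, hr2,
        Finset.card_filter]
    rw [hKsumr, hre]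
    refine Finset.sum_le_sum ?_
    intro y hy
    have := hrpos y hy
    split_ifs with h <;> omega
  have hKc : cols.card + c2 ≤ P.card := by
    have hce : cols.card + c2 = ∑ z ∈ cols, (1 + if 2 ≤ ccnt z then 1 else 0) := by
      rw [Finset.sum_add_distrib, Finset.sum_const, smul_eq_mul, mul_one, hc2,
        Finset.card_filter]
    rw [hKsumc, hce]
    refine Finset.sum_le_sum ?_
    intro z hz
    have := hcpos z hz
    split_ifs with h <;> omega
  -- fiber uniqueness helpers
  have fib_row : ∀ pp ∈ P, rcnt pp.1 = 1 → ∀ t ∈ P, t.1 = pp.1 → t = pp := by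
    intro pp hpp h1 t ht hteq
    have h := Finset.card_le_one.mp (le_of_eq h1)
    exact h t (Finset.mem_filter.mpr ⟨ht, hteq⟩) pp (Finset.mem_filter.mpr ⟨hpp, rfl⟩)
  have fib_col : ∀ pp ∈ P, ccnt pp.2 = 1 → ∀ t ∈ P, t.2 = pp.2 → t = pp := by
    intro pp hpp h1 t ht hteq
    have h := Finset.card_le_one.mp (le_of_eq h1)
    exact h t (Finset.mem_filter.mpr ⟨ht, hteq⟩) pp (Finset.mem_filter.mpr ⟨hpp, rfl⟩)
  set SR := P.filter (fun pp => rcnt pp.1 = 1) with hSR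
  set SC := P.filter (fun pp => ccnt pp.2 = 1) with hSC
  have hSRcard : SR.card = rows.card - r2 := by
    have h1 : SR.card = (rows.filter fun y => rcnt y = 1).card := by
      apply Finset.card_bij (fun pp _ => pp.1)
      · intro pp hpp
        have h := Finset.mem_filter.mp hpp
        exact Finset.mem_filter.mpr ⟨Finset.mem_image_of_mem _ h.1, h.2⟩
      · intro pp hpp qq hqq hpq
        have h := Finset.mem_filter.mp hpp
        have h' := Finset.mem_filter.mp hqq
        exact (fib_row pp h.1 h.2 qq h'.1 hpq.symm).symm
      · intro y hy
        have h := Finset.mem_filter.mp hy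
        obtain ⟨pp, hppm, hppe⟩ := Finset.mem_image.mp h.1
        refine ⟨pp, Finset.mem_filter.mpr ⟨hppm, by rw [hppe]; exact h.2⟩, hppe⟩
    have h2 : (rows.filter fun y => rcnt y = 1) = (rows.filter fun y => ¬ 2 ≤ rcnt y) := by
      apply Finset.filter_congr
      intro y hy
      have := hrpos y hy
      constructor
      · intro hh; omega
      · intro hh; omega
    have h3 := Finset.card_filter_add_card_filter_not (s := rows)
      (p := fun y => 2 ≤ rcnt y)
    rw [h1, h2]
    omega
  have hSCcard : SC.card = cols.card - c2 := by
    have h1 : SC.card = (cols.filter fun z => ccnt z = 1).card := by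
      apply Finset.card_bij (fun pp _ => pp.2)
      · intro pp hpp
        have h := Finset.mem_filter.mp hpp
        exact Finset.mem_filter.mpr ⟨Finset.mem_image_of_mem _ h.1, h.2⟩
      · intro pp hpp qq hqq hpq
        have h := Finset.mem_filter.mp hpp
        have h' := Finset.mem_filter.mp hqq
        exact (fib_col pp h.1 h.2 qq h'.1 hpq.symm).symm
      · intro z hz
        have h := Finset.mem_filter.mp hz
        obtain ⟨pp, hppm, hppe⟩ := Finset.mem_image.mp h.1
        refine ⟨pp, Finset.mem_filter.mpr ⟨hppm, by rw [hppe]; exact h.2⟩, hppe⟩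
    have h2 : (cols.filter fun z => ccnt z = 1) = (cols.filter fun z => ¬ 2 ≤ ccnt z) := by
      apply Finset.filter_congr
      intro z hz
      have := hcpos z hz
      constructor
      · intro hh; omega
      · intro hh; omega
    have h3 := Finset.card_filter_add_card_filter_not (s := cols)
      (p := fun z => 2 ≤ ccnt z)
    rw [h1, h2]
    omega
  have hUnion : SR.card + SC.card ≤ P.card + (SR ∩ SC).card := by
    rw [← Finset.card_union_add_card_inter]
    exact Nat.add_le_add_right (Finset.card_le_card
      (Finset.union_subset (Finset.filter_subset _ _) (Finset.filter_subset _ _))) _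
  have hDS : (SR ∩ SC).card ≤ 1 := by
    by_contra h
    push_neg at h
    obtain ⟨p1, hp1, p2, hp2, hne⟩ := Finset.one_lt_card.mp h
    have hp1' := Finset.mem_inter.mp hp1
    have hp2' := Finset.mem_inter.mp hp2
    have hp1P := (Finset.mem_filter.mp hp1'.1).1
    have hp1r := (Finset.mem_filter.mp hp1'.1).2
    have hp1c := (Finset.mem_filter.mp hp1'.2).2
    have hp2P := (Finset.mem_filter.mp hp2'.1).1
    have hp2r := (Finset.mem_filter.mp hp2'.1).2
    have hp2c := (Finset.mem_filter.mp hp2'.2).2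
    have h11 : p1.1 ≠ p2.1 := by
      intro h
      exact hne (fib_row p2 hp2P hp2r p1 hp1P h)
    have h22 : p1.2 ≠ p2.2 := by
      intro h
      exact hne (fib_col p2 hp2P hp2c p1 hp1P h)
    obtain ⟨p, hp, hne2⟩ := base p2.1 p1.1 p1.2 p2.2 (by
      intro h
      exact h11 ((Prod.mk.injEq _ _ _ _).mp h).1.symm)
    apply hne2
    by_cases e1 : p.1 = p1.1
    · have hpp : p = p1 := fib_row p1 hp1P hp1r p hp e1
      rw [hpp]
      rw [if_neg (fun h => h11 h.symm), if_pos rfl, if_pos rfl, if_neg (fun h => h22 h.symm)]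
    · by_cases e2 : p.1 = p2.1
      · have hpp : p = p2 := fib_row p2 hp2P hp2r p hp e2
        rw [hpp]
        rw [if_pos rfl, if_neg h22, if_neg h11, if_pos rfl]
      · have f1 : ¬ (p1.2 = p.2) := by
          intro h
          exact e1 (congrArg Prod.fst (fib_col p1 hp1P hp1c p hp h.symm))
        have f2 : ¬ (p2.2 = p.2) := by
          intro h
          exact e2 (congrArg Prod.fst (fib_col p2 hp2P hp2c p hp h.symm))
        rw [if_neg (fun h => e2 h.symm), if_neg f1, if_neg (fun h => e1 h.symm), if_neg f2]
  have hd4 : b ≤ rows.card ∨ c ≤ cols.card ∨ (SR ∩ SC).card = 0 := by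
    by_contra hcon
    push_neg at hcon
    obtain ⟨hr, hc', hd⟩ := hcon
    have hvne : rowsᶜ.Nonempty := by
      rw [← Finset.card_pos, Finset.card_compl, Fintype.card_fin]; omega
    have hwne : colsᶜ.Nonempty := by
      rw [← Finset.card_pos, Finset.card_compl, Fintype.card_fin]; omega
    obtain ⟨v, hv⟩ := hvne
    obtain ⟨w', hw'⟩ := hwne
    have hdne : (SR ∩ SC).Nonempty := Finset.card_pos.mp (by omega)
    obtain ⟨p0, hp0⟩ := hdne
    have hp0' := Finset.mem_inter.mp hp0
    have hp0P := (Finset.mem_filter.mp hp0'.1).1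
    have hp0r := (Finset.mem_filter.mp hp0'.1).2
    have hp0c := (Finset.mem_filter.mp hp0'.2).2
    have hv' : v ∉ rows := Finset.mem_compl.mp hv
    have hw'' : w' ∉ cols := Finset.mem_compl.mp hw'
    have hvne2 : v ≠ p0.1 := fun h => hv' (h ▸ Finset.mem_image_of_mem _ hp0P)
    obtain ⟨p, hp, hne2⟩ := base v p0.1 p0.2 w' (by
      intro h
      exact hvne2 ((Prod.mk.injEq _ _ _ _).mp h).1)
    apply hne2
    have e1 : ¬ (v = p.1) := fun h => hv' (h ▸ Finset.mem_image_of_mem _ hp)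
    have e2 : ¬ (w' = p.2) := fun h => hw'' (h ▸ Finset.mem_image_of_mem _ hp)
    by_cases e3 : p0.1 = p.1
    · have hpp : p = p0 := fib_row p0 hp0P hp0r p hp e3.symm
      rw [hpp] at e1 e2 ⊢
      rw [if_neg e1, if_pos rfl, if_pos rfl, if_neg e2]
    · have f1 : ¬ (p0.2 = p.2) := by
        intro h
        exact e3 (congrArg Prod.fst (fib_col p0 hp0P hp0c p hp h.symm)).symm
      rw [if_neg e1, if_neg f1, if_neg e3, if_neg e2]
  omega


lemma mm_lower (a b c : ℕ) (ha : 0 < a) (hb : 2 ≤ b) (hbc : b ≤ c)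
    (Q : Finset (Question a b c)) (hQ : Feasible Q) :
    2 * (b + c - 1) / 3 ≤ Q.card := by
  classical
  have hc : 2 ≤ c := le_trans hb hbc
  set u0 : Fin a := ⟨0, ha⟩ with hu0
  set P : Finset (Fin b × Fin c) := Q.image (fun q => (q.2.1, q.2.2)) with hP
  have base : ∀ (v v' : Fin b) (w w' : Fin c), (v, w) ≠ (v', w') →
      ∃ p ∈ P, ((if v = p.1 then 1 else 0) + (if w = p.2 then 1 else 0) : ℕ) ≠
        (if v' = p.1 then 1 else 0) + (if w' = p.2 then 1 else 0) := by
    intro v v' w w' hne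
    obtain ⟨q, hqQ, hq⟩ := hQ (u0, v, w) (u0, v', w') (by simpa using hne)
    refine ⟨(q.2.1, q.2.2), Finset.mem_image_of_mem _ hqQ, ?_⟩
    intro hEq
    apply hq
    simp only [g]
    dsimp only at hEq
    split_ifs at hEq ⊢ <;> omega
  set rows := P.image Prod.fst with hrows
  set cols := P.image Prod.snd with hcols
  have hR : b - 1 ≤ rows.card := by
    by_contra hcon
    push_neg at hcon
    have h2 : 2 ≤ rowsᶜ.card := by
      rw [Finset.card_compl, Fintype.card_fin]; omega
    obtain ⟨v, hv, v', hv', hvv⟩ := Finset.one_lt_card.mp h2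
    obtain ⟨p, hp, hne⟩ := base v v' ⟨0, by omega⟩ ⟨0, by omega⟩ (by simp [hvv])
    have h1 : ¬ (v = p.1) := fun h => (Finset.mem_compl.mp hv) (h ▸ Finset.mem_image_of_mem _ hp)
    have h1' : ¬ (v' = p.1) := fun h => (Finset.mem_compl.mp hv') (h ▸ Finset.mem_image_of_mem _ hp)
    exact hne (by rw [if_neg h1, if_neg h1'])
  have hC : c - 1 ≤ cols.card := by
    by_contra hcon
    push_neg at hcon
    have h2 : 2 ≤ colsᶜ.card := by
      rw [Finset.card_compl, Fintype.card_fin]; omega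
    obtain ⟨w, hw, w', hw', hww⟩ := Finset.one_lt_card.mp h2
    obtain ⟨p, hp, hne⟩ := base ⟨0, by omega⟩ ⟨0, by omega⟩ w w' (by simp [hww])
    have h1 : ¬ (w = p.2) := fun h => (Finset.mem_compl.mp hw) (h ▸ Finset.mem_image_of_mem _ hp)
    have h1' : ¬ (w' = p.2) := fun h => (Finset.mem_compl.mp hw') (h ▸ Finset.mem_image_of_mem _ hp)
    exact hne (by rw [if_neg h1, if_neg h1'])
  have hcore := mm_core b c hb hc P base hR hC
  have hPQ : P.card ≤ Q.card := Finset.card_image_le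
  omega

lemma mm_main23 (dv dh de k vv ww vv' ww' : ℕ) (hde : de ≤ 1) (hk : k = 2*(dv+dh)+de)
    (hvv : vv ≠ vv') (hww : ww ≠ ww')
    (allp : ∀ p, p < k →
      ((if vv = mmY dv p then 1 else 0) + (if ww = mmZ dv dh p then 1 else 0) : ℕ) =
      (if vv' = mmY dv p then 1 else 0) + (if ww' = mmZ dv dh p then 1 else 0))
    (hvlt : vv < 2*dv + dh) : False := by
  by_cases h1 : vv < 2*dv
  · have hrw := mm_t_row (allp vv (by omega)) hvv (mm_YV dv vv h1)
    have hZv := mm_ZV dv dh vv h1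
    have hv2 : vv/2 < dv := by omega
    have c0 := mm_cellV dv dh (vv/2) 0 hv2 (by omega)
    have c1 := mm_cellV dv dh (vv/2) 1 hv2 (by omega)
    have e2 := mm_t_col (allp (2*(vv/2)+0) (by omega)) hww (by rw [c0.2.2.1]; omega)
    have e3 := mm_t_col (allp (2*(vv/2)+1) (by omega)) hww (by rw [c1.2.2.1]; omega)
    rw [c0.2.1] at e2
    rw [c1.2.1] at e3
    omega
  · have hH0 := mm_cellH dv dh (dv + (vv - 2*dv)) 0 (by omega) (by omega) (by omega)
    have hH1 := mm_cellH dv dh (dv + (vv - 2*dv)) 1 (by omega) (by omega) (by omega)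
    have hjj : dv + (vv - 2*dv) - dv = vv - 2*dv := by omega
    rw [hjj] at hH0 hH1
    have e2 := mm_t_row (allp (2*dv+2*(vv - 2*dv)+0) (by omega)) hvv
      (by rw [hH0.2.1]; omega)
    have e3 := mm_t_row (allp (2*dv+2*(vv - 2*dv)+1) (by omega)) hvv
      (by rw [hH1.2.1]; omega)
    rw [hH0.2.2.1] at e2
    rw [hH1.2.2.1] at e3
    omega

lemma mm_pureH (a dv dh de k sg u vv : ℕ) (ha : 0 < a) (hua : u < a) (hta : a ≤ dv+dh)
    (hk : k = 2*(dv+dh)+de) (hde : de ≤ 1)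
    (hall : ∀ p, p < k → mmL a dv dh sg p = u → mmY dv p = vv) :
    dh = 1 ∧ u = dv := by
  by_cases hbig : u = 0 ∧ a < dv + dh
  · exfalso
    have l1 := mm_lab0 a dv dh sg 0 (by omega)
    rw [mm_cap_eq a 0 (by omega)] at l1
    have l2 := mm_lab0 a dv dh sg a (by omega)
    have hcapa : mmCap a a = 0 := by unfold mmCap; split_ifs <;> omega
    rw [hcapa] at l2
    have y1 := hall (mmI0 dv 0) (by have := mm_I0_lt dv dh 0 (by omega); omega)
      (by rw [l1, hbig.1])
    have y2 := hall (mmI0 dv a) (by have := mm_I0_lt dv dh a (by omega); omega)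
      (by rw [l2, hbig.1])
    have hd := mm_pd dv dh 0 a 0 0 (by omega) (by omega) (by omega) (by omega) (by omega)
    simp only [add_zero] at hd
    exact hd.1 (by rw [y1, y2])
  · by_cases hsng : u = sg ∧ de = 1
    · exfalso
      have l1 := mm_lab0 a dv dh sg u (by omega)
      rw [mm_cap_eq a u hua] at l1
      have y1 := hall (mmI0 dv u) (by have := mm_I0_lt dv dh u (by omega); omega) l1
      have y2 := hall (2*dv+2*dh) (by omega) (by rw [mm_labS a dv dh sg, hsng.1])
      have hd := mm_sd dv dh u 0 (by omega) (by omega)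
      simp only [add_zero] at hd
      exact hd.1 (by rw [y1, y2])
    · have hnl := mm_nxt_lt dv dh u (by omega)
      have l1 := mm_lab0 a dv dh sg u (by omega)
      rw [mm_cap_eq a u hua] at l1
      have l2 := mm_lab1 a dv dh sg (mmNxt dv dh u) hnl.1
      rw [mm_prv_nxt dv dh u (by omega), mm_cap_eq a u hua] at l2
      have y1 := hall (mmI0 dv u) (by have := mm_I0_lt dv dh u (by omega); omega) l1
      have y2 := hall (mmI0 dv (mmNxt dv dh u) + 1)
        (by have := mm_I0_lt dv dh (mmNxt dv dh u) hnl.1; omega) l2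
      by_cases hpu : mmNxt dv dh u = u
      · have hchar := (mm_nxt_self dv dh u (by omega)).mp hpu
        rcases hchar with ⟨hdv1, hu0⟩ | ⟨hdh1, hudv⟩
        · exfalso
          have c0 := mm_cellV dv dh u 0 (by omega) (by omega)
          have c1 := mm_cellV dv dh u 1 (by omega) (by omega)
          simp only [add_zero] at c0
          rw [c0.1] at y1
          rw [hpu, c0.1] at y2
          rw [c0.2.1] at y1
          rw [c1.2.1] at y2
          omega
        · exact ⟨hdh1, hudv⟩
      · exfalso
        have hd := mm_pd dv dh u (mmNxt dv dh u) 0 1 (by omega) hnl.1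
          (fun h => hpu h.symm) (by omega) (by omega)
        simp only [add_zero] at hd
        exact hd.1 (by rw [y1, y2])

lemma mm_pureV (a dv dh de k sg u ww : ℕ) (ha : 0 < a) (hua : u < a) (hta : a ≤ dv+dh)
    (hk : k = 2*(dv+dh)+de) (hde : de ≤ 1)
    (hall : ∀ p, p < k → mmL a dv dh sg p = u → mmZ dv dh p = ww) :
    dv = 1 ∧ u = 0 := by
  by_cases hbig : u = 0 ∧ a < dv + dh
  · exfalso
    have l1 := mm_lab0 a dv dh sg 0 (by omega)
    rw [mm_cap_eq a 0 (by omega)] at l1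
    have l2 := mm_lab0 a dv dh sg a (by omega)
    have hcapa : mmCap a a = 0 := by unfold mmCap; split_ifs <;> omega
    rw [hcapa] at l2
    have y1 := hall (mmI0 dv 0) (by have := mm_I0_lt dv dh 0 (by omega); omega)
      (by rw [l1, hbig.1])
    have y2 := hall (mmI0 dv a) (by have := mm_I0_lt dv dh a (by omega); omega)
      (by rw [l2, hbig.1])
    have hd := mm_pd dv dh 0 a 0 0 (by omega) (by omega) (by omega) (by omega) (by omega)
    simp only [add_zero] at hd
    exact hd.2 (by rw [y1, y2])
  · by_cases hsng : u = sg ∧ de = 1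
    · exfalso
      have l1 := mm_lab0 a dv dh sg u (by omega)
      rw [mm_cap_eq a u hua] at l1
      have y1 := hall (mmI0 dv u) (by have := mm_I0_lt dv dh u (by omega); omega) l1
      have y2 := hall (2*dv+2*dh) (by omega) (by rw [mm_labS a dv dh sg, hsng.1])
      have hd := mm_sd dv dh u 0 (by omega) (by omega)
      simp only [add_zero] at hd
      exact hd.2 (by rw [y1, y2])
    · have hnl := mm_nxt_lt dv dh u (by omega)
      have l1 := mm_lab0 a dv dh sg u (by omega)
      rw [mm_cap_eq a u hua] at l1
      have l2 := mm_lab1 a dv dh sg (mmNxt dv dh u) hnl.1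
      rw [mm_prv_nxt dv dh u (by omega), mm_cap_eq a u hua] at l2
      have y1 := hall (mmI0 dv u) (by have := mm_I0_lt dv dh u (by omega); omega) l1
      have y2 := hall (mmI0 dv (mmNxt dv dh u) + 1)
        (by have := mm_I0_lt dv dh (mmNxt dv dh u) hnl.1; omega) l2
      by_cases hpu : mmNxt dv dh u = u
      · have hchar := (mm_nxt_self dv dh u (by omega)).mp hpu
        rcases hchar with ⟨hdv1, hu0⟩ | ⟨hdh1, hudv⟩
        · exact ⟨hdv1, hu0⟩
        · exfalso
          have c0 := mm_cellH dv dh u 0 (by omega) (by omega) (by omega)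
          have c1 := mm_cellH dv dh u 1 (by omega) (by omega) (by omega)
          simp only [add_zero] at c0
          rw [c0.1] at y1
          rw [hpu, c0.1] at y2
          rw [c0.2.2.1] at y1
          rw [c1.2.2.1] at y2
          omega
      · exfalso
        have hd := mm_pd dv dh u (mmNxt dv dh u) 0 1 (by omega) hnl.1
          (fun h => hpu h.symm) (by omega) (by omega)
        simp only [add_zero] at hd
        exact hd.2 (by rw [y1, y2])

lemma mm_classify (a b c dv dh de k u tv ov tw ow : ℕ)
    (ha2 : 2 ≤ a) (hua : u < a) (hta : a ≤ dv+dh)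
    (hk : k = 2*(dv+dh)+de) (hde : de ≤ 1)
    (hcolsum : dv+2*dh+de = c-1) (hrowse : de = 1 → 2*dv+dh+de = b)
    (hok : mmOK a b c)
    (hov : ov ≠ tv) (how : ow ≠ tw)
    (form : ∀ p, p < k → mmL a dv dh (mmSG a dv) p = u →
      (mmY dv p = tv ∧ mmZ dv dh p ≠ ow ∧ mmZ dv dh p ≠ tw) ∨
      (mmZ dv dh p = tw ∧ mmY dv p ≠ ov ∧ mmY dv p ≠ tv)) :
    (dv = 1 ∧ u = 0 ∧ tw = 0 ∧ 0 ≠ ov ∧ 0 ≠ tv ∧ 1 ≠ ov ∧ 1 ≠ tv ∧ ¬(u = (mmSG a dv) ∧ de = 1)) ∨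
    (dh = 1 ∧ u = dv ∧ tv = 2*dv ∧ dv ≠ ow ∧ dv ≠ tw ∧ dv+1 ≠ ow ∧ dv+1 ≠ tw ∧
      ¬(u = (mmSG a dv) ∧ de = 1)) ∨
    (mmNxt dv dh u ≠ u ∧ ∃ pA pOA pB pOB,
      pA < k ∧ pOA < k ∧ pB < k ∧ pOB < k ∧
      mmL a dv dh (mmSG a dv) pA = u ∧ mmL a dv dh (mmSG a dv) pB = u ∧
      mmL a dv dh (mmSG a dv) pOA ≠ u ∧ mmL a dv dh (mmSG a dv) pOB ≠ u ∧
      mmY dv pA = tv ∧ mmZ dv dh pA ≠ ow ∧ mmZ dv dh pA ≠ tw ∧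
      mmZ dv dh pB = tw ∧ mmY dv pB ≠ ov ∧ mmY dv pB ≠ tv ∧
      (u < dv → mmZ dv dh pOB = tw ∧ pOB < 2*dv ∧ mmY dv pOB < 2*dv) ∧
      (dv ≤ u → mmY dv pOA = tv ∧ 2*dv ≤ pOA ∧ pOA < 2*dv+2*dh ∧ dv ≤ mmZ dv dh pOA)) := by
  by_cases hbig : u = 0 ∧ a < dv + dh
  · -- label 0 owns at least two pieces: immune via three cells, contradiction
    exfalso
    have l1 := mm_lab0 a dv dh (mmSG a dv) 0 (by omega)
    rw [mm_cap_eq a 0 (by omega)] at l1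
    have l2 := mm_lab0 a dv dh (mmSG a dv) a (by omega)
    have hcapa : mmCap a a = 0 := by unfold mmCap; split_ifs <;> omega
    rw [hcapa] at l2
    -- choose third piece j with cell of label 0
    have hthird : ∃ j, j < dv+dh ∧ j ≠ 0 ∧ j ≠ a ∧ mmPrv dv dh j = 0 ∨
        j < dv+dh ∧ j ≠ 0 ∧ j ≠ a ∧ mmPrv dv dh j = a := by
      by_cases hnx : mmNxt dv dh 0 = 0
      · -- piece 0 pure, use successor of piece a
        refine ⟨mmNxt dv dh a, Or.inr ⟨(mm_nxt_lt dv dh a (by omega)).1, ?_, ?_,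
          mm_prv_nxt dv dh a (by omega)⟩⟩
        · -- nxt a ≠ 0
          have hchar := (mm_nxt_self dv dh 0 (by omega)).mp hnx
          have hdv1 : dv = 1 := by omega
          have h2 := (mm_nxt_lt dv dh a (by omega)).2
          omega
        · intro h
          have := (mm_nxt_self dv dh a (by omega)).mp h
          have hchar := (mm_nxt_self dv dh 0 (by omega)).mp hnx
          omega
      · refine ⟨mmNxt dv dh 0, Or.inl ⟨(mm_nxt_lt dv dh 0 (by omega)).1, hnx, ?_,
          mm_prv_nxt dv dh 0 (by omega)⟩⟩
        have hor : mmNxt dv dh 0 = 0 ∨ mmNxt dv dh 0 = 1 := by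
          unfold mmNxt; split_ifs <;> omega
        omega
    obtain ⟨j, hj⟩ := hthird
    have hjlt : j < dv+dh := by rcases hj with ⟨h,_,_,_⟩|⟨h,_,_,_⟩ <;> exact h
    have hj0 : j ≠ 0 := by rcases hj with ⟨_,h,_,_⟩|⟨_,h,_,_⟩ <;> exact h
    have hja : j ≠ a := by rcases hj with ⟨_,_,h,_⟩|⟨_,_,h,_⟩ <;> exact h
    have l3 : mmL a dv dh (mmSG a dv) (mmI0 dv j + 1) = 0 := by
      rw [mm_lab1 a dv dh (mmSG a dv) j hjlt]
      rcases hj with ⟨_,_,_,h⟩|⟨_,_,_,h⟩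
      · rw [h]; exact mm_cap_eq a 0 (by omega)
      · rw [h]; unfold mmCap; split_ifs <;> omega
    have hk1 : mmI0 dv 0 < k := by have := mm_I0_lt dv dh 0 (by omega); omega
    have hk2 : mmI0 dv a < k := by have := mm_I0_lt dv dh a (by omega); omega
    have hk3 : mmI0 dv j + 1 < k := by have := mm_I0_lt dv dh j hjlt; omega
    have f1 := form (mmI0 dv 0) hk1 (by rw [l1, hbig.1])
    have f2 := form (mmI0 dv a) hk2 (by rw [l2, hbig.1])
    have f3 := form (mmI0 dv j + 1) hk3 (by rw [l3, hbig.1])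
    have d12 := mm_pd dv dh 0 a 0 0 (by omega) (by omega) (by omega) (by omega) (by omega)
    have d13 := mm_pd dv dh 0 j 0 1 (by omega) hjlt (fun h => hj0 h.symm) (by omega) (by omega)
    have d23 := mm_pd dv dh a j 0 1 (by omega) hjlt (fun h => hja h.symm) (by omega) (by omega)
    simp only [add_zero] at d12 d13 d23
    rcases f1 with ⟨e1,_,_⟩|⟨e1,_,_⟩ <;> rcases f2 with ⟨e2,_,_⟩|⟨e2,_,_⟩ <;>
      rcases f3 with ⟨e3,_,_⟩|⟨e3,_,_⟩ <;> omega
  · by_cases hsng : u = (mmSG a dv) ∧ de = 1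
    · exfalso
      by_cases hpu : mmNxt dv dh u = u
      · -- pure singleton label: only the excluded instance
        have hchar := (mm_nxt_self dv dh u (by omega)).mp hpu
        rcases hchar with ⟨hdv1, hu0⟩ | ⟨hdh1, hudv⟩
        · have hs := mmSG_spec a dv
          omega
        · -- dh = 1, u = dv : derive the (2,4,5) instance
          have hs := mmSG_spec a dv
          have h2 := hok.2
          omega
      · -- non-pure with singleton: three cells
        have hnl := mm_nxt_lt dv dh u (by omega)
        have l1 := mm_lab0 a dv dh (mmSG a dv) u (by omega)
        rw [mm_cap_eq a u hua] at l1
        have l2 := mm_lab1 a dv dh (mmSG a dv) (mmNxt dv dh u) hnl.1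
        rw [mm_prv_nxt dv dh u (by omega), mm_cap_eq a u hua] at l2
        have hk1 : mmI0 dv u < k := by have := mm_I0_lt dv dh u (by omega); omega
        have hk2 : mmI0 dv (mmNxt dv dh u) + 1 < k := by
          have := mm_I0_lt dv dh (mmNxt dv dh u) hnl.1; omega
        have hk3 : 2*dv+2*dh < k := by omega
        have f1 := form (mmI0 dv u) hk1 l1
        have f2 := form (mmI0 dv (mmNxt dv dh u) + 1) hk2 l2
        have f3 := form (2*dv+2*dh) hk3 (by rw [mm_labS a dv dh (mmSG a dv), hsng.1])
        have d12 := mm_pd dv dh u (mmNxt dv dh u) 0 1 (by omega) hnl.1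
          (fun h => hpu h.symm) (by omega) (by omega)
        have d13 := mm_sd dv dh u 0 (by omega) (by omega)
        have d23 := mm_sd dv dh (mmNxt dv dh u) 1 hnl.1 (by omega)
        simp only [add_zero] at d12 d13 d23
        rcases f1 with ⟨e1,_,_⟩|⟨e1,_,_⟩ <;> rcases f2 with ⟨e2,_,_⟩|⟨e2,_,_⟩ <;>
          rcases f3 with ⟨e3,_,_⟩|⟨e3,_,_⟩ <;> omega
    · -- exactly the two canonical cells
      have hnl := mm_nxt_lt dv dh u (by omega)
      have l1 := mm_lab0 a dv dh (mmSG a dv) u (by omega)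
      rw [mm_cap_eq a u hua] at l1
      have l2 := mm_lab1 a dv dh (mmSG a dv) (mmNxt dv dh u) hnl.1
      rw [mm_prv_nxt dv dh u (by omega), mm_cap_eq a u hua] at l2
      have hk1 : mmI0 dv u < k := by have := mm_I0_lt dv dh u (by omega); omega
      have hk2 : mmI0 dv (mmNxt dv dh u) + 1 < k := by
        have := mm_I0_lt dv dh (mmNxt dv dh u) hnl.1; omega
      have f1 := form (mmI0 dv u) hk1 l1
      have f2 := form (mmI0 dv (mmNxt dv dh u) + 1) hk2 l2
      by_cases hpu : mmNxt dv dh u = u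
      · -- pure
        have hchar := (mm_nxt_self dv dh u (by omega)).mp hpu
        rcases hchar with ⟨hdv1, hu0⟩ | ⟨hdh1, hudv⟩
        · -- V pure
          left
          have c0 := mm_cellV dv dh u 0 (by omega) (by omega)
          have c1 := mm_cellV dv dh u 1 (by omega) (by omega)
          simp only [add_zero] at c0
          rw [c0.1] at f1
          rw [hpu, c0.1] at f2
          rw [c0.2.1, c0.2.2.1] at f1
          rw [c1.2.1, c1.2.2.1] at f2
          rcases f1 with ⟨e1,e1',e1''⟩|⟨e1,e1',e1''⟩ <;>
            rcases f2 with ⟨e2,e2',e2''⟩|⟨e2,e2',e2''⟩ <;>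
            refine ⟨hdv1, hu0, by omega, by omega, by omega, by omega, by omega, hsng⟩
        · -- H pure
          right; left
          have c0 := mm_cellH dv dh u 0 (by omega) (by omega) (by omega)
          have c1 := mm_cellH dv dh u 1 (by omega) (by omega) (by omega)
          simp only [add_zero] at c0
          rw [c0.1] at f1
          rw [hpu, c0.1] at f2
          rw [c0.2.1, c0.2.2.1] at f1
          rw [c1.2.1, c1.2.2.1] at f2
          rcases f1 with ⟨e1,e1',e1''⟩|⟨e1,e1',e1''⟩ <;>
            rcases f2 with ⟨e2,e2',e2''⟩|⟨e2,e2',e2''⟩ <;>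
            refine ⟨hdh1, hudv, by omega, by omega, by omega, by omega, by omega, hsng⟩
      · -- non-pure : N data
        right; right
        refine ⟨hpu, ?_⟩
        have d12 := mm_pd dv dh u (mmNxt dv dh u) 0 1 (by omega) hnl.1
          (fun h => hpu h.symm) (by omega) (by omega)
        simp only [add_zero] at d12
        have hprvu : mmPrv dv dh u ≠ u := by
          intro h
          exact hpu ((mm_prv_self dv dh u (by omega)).mp h)
        have hprvlt := mm_prv_lt dv dh u (by omega)
        -- partner labels
        have lp1 : mmL a dv dh (mmSG a dv) (mmI0 dv u + 1) = mmCap a (mmPrv dv dh u) :=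
          mm_lab1 a dv dh (mmSG a dv) u (by omega)
        have lp2 : mmL a dv dh (mmSG a dv) (mmI0 dv (mmNxt dv dh u)) = mmCap a (mmNxt dv dh u) :=
          mm_lab0 a dv dh (mmSG a dv) (mmNxt dv dh u) hnl.1
        have lp1ne : mmL a dv dh (mmSG a dv) (mmI0 dv u + 1) ≠ u := by
          rw [lp1]; exact mm_cap_ne a (dv+dh) _ u hprvlt.1 hprvu hua hbig
        have lp2ne : mmL a dv dh (mmSG a dv) (mmI0 dv (mmNxt dv dh u)) ≠ u := by
          rw [lp2]; exact mm_cap_ne a (dv+dh) _ u hnl.1 hpu hua hbig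
        have hk1' : mmI0 dv u + 1 < k := by have := mm_I0_lt dv dh u (by omega); omega
        have hk2' : mmI0 dv (mmNxt dv dh u) < k := by
          have := mm_I0_lt dv dh (mmNxt dv dh u) hnl.1; omega
        rcases f1 with ⟨e1,e1',e1''⟩|⟨e1,e1',e1''⟩ <;> rcases f2 with ⟨e2,e2',e2''⟩|⟨e2,e2',e2''⟩
        · exact absurd (e1.trans e2.symm) d12.1
        · -- pA = slot0 of piece u ; pB = slot1 of piece nxt u
          refine ⟨mmI0 dv u, mmI0 dv u + 1, mmI0 dv (mmNxt dv dh u) + 1,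
            mmI0 dv (mmNxt dv dh u), hk1, hk1', hk2, hk2', l1, l2, lp1ne, lp2ne,
            e1, e1', e1'', e2, e2', e2'', ?_, ?_⟩
          · intro huv
            have hnv : mmNxt dv dh u < dv := (hnl.2).mp huv
            have cB := mm_cellV dv dh (mmNxt dv dh u) 1 hnv (by omega)
            have cO := mm_cellV dv dh (mmNxt dv dh u) 0 hnv (by omega)
            simp only [add_zero] at cO
            refine ⟨?_, ?_, ?_⟩
            · rw [cO.1, cO.2.2.1]
              rw [cB.1, cB.2.2.1] at e2
              omega
            · rw [cO.1]; omega
            · rw [cO.1, cO.2.1]; omega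
          · intro huv
            have hnv : dv ≤ u := huv
            have cA := mm_cellH dv dh u 0 hnv (by omega) (by omega)
            have cO := mm_cellH dv dh u 1 hnv (by omega) (by omega)
            simp only [add_zero] at cA
            rw [cA.1] at e1 ⊢
            rw [cA.2.1] at e1
            refine ⟨?_, ?_, ?_, ?_⟩
            · rw [cO.2.1]; omega
            · omega
            · omega
            · rw [cO.2.2.1]; omega
        · -- pA = slot1 of piece nxt u ; pB = slot0 of piece u
          refine ⟨mmI0 dv (mmNxt dv dh u) + 1, mmI0 dv (mmNxt dv dh u),
            mmI0 dv u, mmI0 dv u + 1, hk2, hk2', hk1, hk1', l2, l1, lp2ne, lp1ne,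
            e2, e2', e2'', e1, e1', e1'', ?_, ?_⟩
          · intro huv
            have cB := mm_cellV dv dh u 0 huv (by omega)
            have cO := mm_cellV dv dh u 1 huv (by omega)
            simp only [add_zero] at cB
            refine ⟨?_, ?_, ?_⟩
            · rw [cB.1]
              rw [cB.1, cB.2.2.1] at e1
              rw [cO.2.2.1]
              omega
            · rw [cB.1]; omega
            · rw [cB.1, cO.2.1]; omega
          · intro huv
            have hnv : dv ≤ mmNxt dv dh u := by
              have := hnl.2; omega
            have cA := mm_cellH dv dh (mmNxt dv dh u) 1 hnv hnl.1 (by omega)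
            have cO := mm_cellH dv dh (mmNxt dv dh u) 0 hnv hnl.1 (by omega)
            simp only [add_zero] at cO
            rw [cA.1] at e2 ⊢
            rw [cA.2.1] at e2
            refine ⟨?_, ?_, ?_, ?_⟩
            · rw [cO.2.1]; omega
            · omega
            · omega
            · rw [cO.2.2.1]; omega
        · exact absurd (e1.trans e2.symm) d12.2

-- u1 of type N, u2 of type VP
lemma mm_123_NVP (a b c dv dh de k u1 v1 w1 u2 v2 w2 pA1 pOA1 pB1 pOB1 : ℕ)
    (hde : de ≤ 1) (hk : k = 2*(dv+dh)+de)
    (hu : u1 ≠ u2) (hv : v1 ≠ v2) (hw : w1 ≠ w2)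
    (hpA1k : pA1 < k) (hpOA1k : pOA1 < k) (hpB1k : pB1 < k) (hpOB1k : pOB1 < k)
    (lOA1 : mmL a dv dh (mmSG a dv) pOA1 ≠ u1)
    (hH1 : dv ≤ u1 → mmY dv pOA1 = v2 ∧ 2*dv ≤ pOA1 ∧ pOA1 < 2*dv+2*dh ∧
      dv ≤ mmZ dv dh pOA1)
    (hdv1 : dv = 1) (hu20 : u2 = 0) (hw10 : w1 = 0)
    (formB : ∀ p, p < k → mmL a dv dh (mmSG a dv) p = u2 →
      (mmY dv p = v1 ∧ mmZ dv dh p ≠ w2 ∧ mmZ dv dh p ≠ w1) ∨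
      (mmZ dv dh p = w1 ∧ mmY dv p ≠ v2 ∧ mmY dv p ≠ v1))
    (formC : ∀ p, p < k → mmL a dv dh (mmSG a dv) p ≠ u1 → mmL a dv dh (mmSG a dv) p ≠ u2 →
      (mmY dv p ≠ v1 ∧ mmY dv p ≠ v2 ∧ mmZ dv dh p ≠ w1 ∧ mmZ dv dh p ≠ w2) ∨
      (mmY dv p = v1 ∧ mmZ dv dh p = w2) ∨ (mmY dv p = v2 ∧ mmZ dv dh p = w1)) : False := by
  have hu1dv : dv ≤ u1 := by omega
  obtain ⟨hyOA, hOAlo, hOAhi, hZOA⟩ := hH1 hu1dv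
  by_cases hL : mmL a dv dh (mmSG a dv) pOA1 = u2
  · rcases formB pOA1 hpOA1k hL with ⟨e,_,_⟩|⟨_,e,_⟩ <;> omega
  · rcases formC pOA1 hpOA1k lOA1 hL with ⟨e,_,_,_⟩|⟨e,_⟩|⟨_,e⟩ <;> omega

-- u1 of type VP, u2 of type N
lemma mm_123_VPN (a b c dv dh de k u1 v1 w1 u2 v2 w2 pA2 pOA2 pB2 pOB2 : ℕ)
    (hde : de ≤ 1) (hk : k = 2*(dv+dh)+de)
    (hu : u1 ≠ u2) (hv : v1 ≠ v2) (hw : w1 ≠ w2)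
    (hpA2k : pA2 < k) (hpOA2k : pOA2 < k) (hpB2k : pB2 < k) (hpOB2k : pOB2 < k)
    (lOA2 : mmL a dv dh (mmSG a dv) pOA2 ≠ u2)
    (hH2 : dv ≤ u2 → mmY dv pOA2 = v1 ∧ 2*dv ≤ pOA2 ∧ pOA2 < 2*dv+2*dh ∧
      dv ≤ mmZ dv dh pOA2)
    (hdv1 : dv = 1) (hu10 : u1 = 0) (hw20 : w2 = 0)
    (formA : ∀ p, p < k → mmL a dv dh (mmSG a dv) p = u1 →
      (mmY dv p = v2 ∧ mmZ dv dh p ≠ w1 ∧ mmZ dv dh p ≠ w2) ∨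
      (mmZ dv dh p = w2 ∧ mmY dv p ≠ v1 ∧ mmY dv p ≠ v2))
    (formC : ∀ p, p < k → mmL a dv dh (mmSG a dv) p ≠ u1 → mmL a dv dh (mmSG a dv) p ≠ u2 →
      (mmY dv p ≠ v1 ∧ mmY dv p ≠ v2 ∧ mmZ dv dh p ≠ w1 ∧ mmZ dv dh p ≠ w2) ∨
      (mmY dv p = v1 ∧ mmZ dv dh p = w2) ∨ (mmY dv p = v2 ∧ mmZ dv dh p = w1)) : False := by
  have hu2dv : dv ≤ u2 := by omega
  obtain ⟨hyOA, hOAlo, hOAhi, hZOA⟩ := hH2 hu2dv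
  by_cases hL : mmL a dv dh (mmSG a dv) pOA2 = u1
  · rcases formA pOA2 hpOA2k hL with ⟨e,_,_⟩|⟨_,e,_⟩ <;> omega
  · rcases formC pOA2 hpOA2k hL lOA2 with ⟨e,_,_,_⟩|⟨_,e⟩|⟨e,_⟩ <;> omega

-- u1 of type N, u2 of type HP
lemma mm_123_NHP (a b c dv dh de k u1 v1 w1 u2 v2 w2 pA1 pOA1 pB1 pOB1 : ℕ)
    (hde : de ≤ 1) (hk : k = 2*(dv+dh)+de) (hu1a : u1 < a) (hta : a ≤ dv+dh)
    (hu : u1 ≠ u2) (hv : v1 ≠ v2) (hw : w1 ≠ w2)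
    (hpA1k : pA1 < k) (hpOA1k : pOA1 < k) (hpB1k : pB1 < k) (hpOB1k : pOB1 < k)
    (lOB1 : mmL a dv dh (mmSG a dv) pOB1 ≠ u1)
    (hV1 : u1 < dv → mmZ dv dh pOB1 = w2 ∧ pOB1 < 2*dv ∧ mmY dv pOB1 < 2*dv)
    (hdh1 : dh = 1) (hu2dv : u2 = dv) (hv12dv : v1 = 2*dv)
    (formB : ∀ p, p < k → mmL a dv dh (mmSG a dv) p = u2 →
      (mmY dv p = v1 ∧ mmZ dv dh p ≠ w2 ∧ mmZ dv dh p ≠ w1) ∨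
      (mmZ dv dh p = w1 ∧ mmY dv p ≠ v2 ∧ mmY dv p ≠ v1))
    (formC : ∀ p, p < k → mmL a dv dh (mmSG a dv) p ≠ u1 → mmL a dv dh (mmSG a dv) p ≠ u2 →
      (mmY dv p ≠ v1 ∧ mmY dv p ≠ v2 ∧ mmZ dv dh p ≠ w1 ∧ mmZ dv dh p ≠ w2) ∨
      (mmY dv p = v1 ∧ mmZ dv dh p = w2) ∨ (mmY dv p = v2 ∧ mmZ dv dh p = w1)) : False := by
  have hu1dv : u1 < dv := by omega
  obtain ⟨hzOB, hOBlo, hyOBlt⟩ := hV1 hu1dv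
  by_cases hL : mmL a dv dh (mmSG a dv) pOB1 = u2
  · rcases formB pOB1 hpOB1k hL with ⟨_,e,_⟩|⟨e,_,_⟩ <;> omega
  · rcases formC pOB1 hpOB1k lOB1 hL with ⟨_,_,_,e⟩|⟨e1,e2⟩|⟨_,e⟩ <;> omega

-- u1 of type HP, u2 of type N
lemma mm_123_HPN (a b c dv dh de k u1 v1 w1 u2 v2 w2 pA2 pOA2 pB2 pOB2 : ℕ)
    (hde : de ≤ 1) (hk : k = 2*(dv+dh)+de) (hu2a : u2 < a) (hta : a ≤ dv+dh)
    (hu : u1 ≠ u2) (hv : v1 ≠ v2) (hw : w1 ≠ w2)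
    (hpA2k : pA2 < k) (hpOA2k : pOA2 < k) (hpB2k : pB2 < k) (hpOB2k : pOB2 < k)
    (lOB2 : mmL a dv dh (mmSG a dv) pOB2 ≠ u2)
    (hV2 : u2 < dv → mmZ dv dh pOB2 = w1 ∧ pOB2 < 2*dv ∧ mmY dv pOB2 < 2*dv)
    (hdh1 : dh = 1) (hu1dv : u1 = dv) (hv22dv : v2 = 2*dv)
    (formA : ∀ p, p < k → mmL a dv dh (mmSG a dv) p = u1 →
      (mmY dv p = v2 ∧ mmZ dv dh p ≠ w1 ∧ mmZ dv dh p ≠ w2) ∨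
      (mmZ dv dh p = w2 ∧ mmY dv p ≠ v1 ∧ mmY dv p ≠ v2))
    (formC : ∀ p, p < k → mmL a dv dh (mmSG a dv) p ≠ u1 → mmL a dv dh (mmSG a dv) p ≠ u2 →
      (mmY dv p ≠ v1 ∧ mmY dv p ≠ v2 ∧ mmZ dv dh p ≠ w1 ∧ mmZ dv dh p ≠ w2) ∨
      (mmY dv p = v1 ∧ mmZ dv dh p = w2) ∨ (mmY dv p = v2 ∧ mmZ dv dh p = w1)) : False := by
  have hu2dv : u2 < dv := by omega
  obtain ⟨hzOB, hOBlo, hyOBlt⟩ := hV2 hu2dv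
  by_cases hL : mmL a dv dh (mmSG a dv) pOB2 = u1
  · rcases formA pOB2 hpOB2k hL with ⟨_,_,e⟩|⟨e,_,_⟩ <;> omega
  · rcases formC pOB2 hpOB2k hL lOB2 with ⟨_,_,e,_⟩|⟨_,e⟩|⟨e,_⟩ <;> omega

-- both of type N
lemma mm_123_NN (a b c dv dh de k u1 v1 w1 u2 v2 w2 pA1 pOA1 pB1 pOB1 pA2 pOA2 pB2 pOB2 : ℕ)
    (hde : de ≤ 1) (hk : k = 2*(dv+dh)+de)
    (hu : u1 ≠ u2) (hv : v1 ≠ v2) (hw : w1 ≠ w2)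
    (hpA1k : pA1 < k) (hpOA1k : pOA1 < k) (hpB1k : pB1 < k) (hpOB1k : pOB1 < k)
    (hpA2k : pA2 < k) (hpOA2k : pOA2 < k) (hpB2k : pB2 < k) (hpOB2k : pOB2 < k)
    (lA2 : mmL a dv dh (mmSG a dv) pA2 = u2) (lB2 : mmL a dv dh (mmSG a dv) pB2 = u2)
    (lOA1 : mmL a dv dh (mmSG a dv) pOA1 ≠ u1) (lOB1 : mmL a dv dh (mmSG a dv) pOB1 ≠ u1)
    (yA2 : mmY dv pA2 = v1) (zB2 : mmZ dv dh pB2 = w1)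
    (hV1 : u1 < dv → mmZ dv dh pOB1 = w2 ∧ pOB1 < 2*dv ∧ mmY dv pOB1 < 2*dv)
    (hH1 : dv ≤ u1 → mmY dv pOA1 = v2 ∧ 2*dv ≤ pOA1 ∧ pOA1 < 2*dv+2*dh ∧
      dv ≤ mmZ dv dh pOA1)
    (formB : ∀ p, p < k → mmL a dv dh (mmSG a dv) p = u2 →
      (mmY dv p = v1 ∧ mmZ dv dh p ≠ w2 ∧ mmZ dv dh p ≠ w1) ∨
      (mmZ dv dh p = w1 ∧ mmY dv p ≠ v2 ∧ mmY dv p ≠ v1))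
    (formC : ∀ p, p < k → mmL a dv dh (mmSG a dv) p ≠ u1 → mmL a dv dh (mmSG a dv) p ≠ u2 →
      (mmY dv p ≠ v1 ∧ mmY dv p ≠ v2 ∧ mmZ dv dh p ≠ w1 ∧ mmZ dv dh p ≠ w2) ∨
      (mmY dv p = v1 ∧ mmZ dv dh p = w2) ∨ (mmY dv p = v2 ∧ mmZ dv dh p = w1)) : False := by
  by_cases hblk : u1 < dv
  · obtain ⟨hzOB, hOBlo, hyOBlt⟩ := hV1 hblk
    by_cases hL : mmL a dv dh (mmSG a dv) pOB1 = u2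
    · rcases formB pOB1 hpOB1k hL with ⟨_,e,_⟩|⟨e,_,_⟩ <;> omega
    · have hyOB : mmY dv pOB1 = v1 := by
        rcases formC pOB1 hpOB1k lOB1 hL with ⟨_,_,_,e⟩|⟨e1,e2⟩|⟨_,e⟩ <;> omega
      have hne : pOB1 ≠ pA2 := by
        intro h; rw [h] at hL; exact hL lA2
      have hrl := mm_rowlem dv dh de pOB1 pA2 hde (by omega) (by omega) hne
        (by rw [hyOB, yA2])
      omega
  · obtain ⟨hyOA, hOAlo, hOAhi, hZOA⟩ := hH1 (by omega)
    by_cases hL : mmL a dv dh (mmSG a dv) pOA1 = u2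
    · rcases formB pOA1 hpOA1k hL with ⟨e,_,_⟩|⟨_,e,_⟩ <;> omega
    · have hzOA : mmZ dv dh pOA1 = w1 := by
        rcases formC pOA1 hpOA1k lOA1 hL with ⟨e,_,_,_⟩|⟨e,_⟩|⟨_,e⟩ <;> omega
      have hne : pOA1 ≠ pB2 := by
        intro h; rw [h] at hL; exact hL lB2
      have hcl := mm_collem dv dh de pOA1 pB2 hde (by omega) (by omega) hne
        (by rw [hzOA, zB2])
      omega

lemma mm_main123 (a b c dv dh de k u1 v1 w1 u2 v2 w2 : ℕ)
    (hde : de ≤ 1) (hk : k = 2*(dv+dh)+de) (hcolsum : dv+2*dh+de = c-1)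
    (hrows1 : b-1 ≤ 2*dv+dh+de) (hrows2 : 2*dv+dh+de ≤ b)
    (hrowse : de = 1 → 2*dv+dh+de = b) (hta : a ≤ dv+dh)
    (hok : mmOK a b c)
    (hu1a : u1 < a) (hu2a : u2 < a) (hv1b : v1 < b) (hv2b : v2 < b)
    (hw1c : w1 < c) (hw2c : w2 < c)
    (hu : u1 ≠ u2) (hv : v1 ≠ v2) (hw : w1 ≠ w2)
    (key : ∀ p, p < k →
      ((if u1 = mmL a dv dh (mmSG a dv) p then 1 else 0) + (if v1 = mmY dv p then 1 else 0) +
        (if w1 = mmZ dv dh p then 1 else 0) : ℕ) =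
      (if u2 = mmL a dv dh (mmSG a dv) p then 1 else 0) + (if v2 = mmY dv p then 1 else 0) +
        (if w2 = mmZ dv dh p then 1 else 0)) : False := by
  have ha2 : 2 ≤ a := by omega
  have formA : ∀ p, p < k → mmL a dv dh (mmSG a dv) p = u1 →
      (mmY dv p = v2 ∧ mmZ dv dh p ≠ w1 ∧ mmZ dv dh p ≠ w2) ∨
      (mmZ dv dh p = w2 ∧ mmY dv p ≠ v1 ∧ mmY dv p ≠ v2) :=
    fun p hp hl => mm_formA (key p hp) hu hv hw hl
  have formB : ∀ p, p < k → mmL a dv dh (mmSG a dv) p = u2 →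
      (mmY dv p = v1 ∧ mmZ dv dh p ≠ w2 ∧ mmZ dv dh p ≠ w1) ∨
      (mmZ dv dh p = w1 ∧ mmY dv p ≠ v2 ∧ mmY dv p ≠ v1) :=
    fun p hp hl => mm_formA (key p hp).symm (Ne.symm hu) (Ne.symm hv) (Ne.symm hw) hl
  have formC : ∀ p, p < k → mmL a dv dh (mmSG a dv) p ≠ u1 → mmL a dv dh (mmSG a dv) p ≠ u2 →
      (mmY dv p ≠ v1 ∧ mmY dv p ≠ v2 ∧ mmZ dv dh p ≠ w1 ∧ mmZ dv dh p ≠ w2) ∨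
      (mmY dv p = v1 ∧ mmZ dv dh p = w2) ∨ (mmY dv p = v2 ∧ mmZ dv dh p = w1) :=
    fun p hp h1 h2 => mm_formC (key p hp) hv hw h1 h2
  have r1 := mm_classify a b c dv dh de k u1 v2 v1 w2 w1 ha2 hu1a hta hk hde
    hcolsum hrowse hok hv hw formA
  have r2 := mm_classify a b c dv dh de k u2 v1 v2 w1 w2 ha2 hu2a hta hk hde
    hcolsum hrowse hok (Ne.symm hv) (Ne.symm hw) formB
  clear key
  rcases r1 with ⟨hdv1, hu10, hw20, hx1, hx2, hx3, hx4, hs1⟩ |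
      ⟨hdh1, hu1dv, hv22dv, hy1, hy2, hy3, hy4, hs1⟩ | ⟨hnp1, pA1, pOA1, pB1, pOB1, hpA1k,
      hpOA1k, hpB1k, hpOB1k, lA1, lB1, lOA1, lOB1, yA1, zA1, zA1', zB1, yB1, yB1', hV1, hH1⟩
  · rcases r2 with ⟨hdv1', hu20, hw10, hx1', hx2', hx3', hx4', hs2⟩ |
        ⟨hdh1, hu2dv, hv12dv, hy1, hy2, hy3, hy4, hs2⟩ | ⟨hnp2, pA2, pOA2, pB2, pOB2, hpA2k,
        hpOA2k, hpB2k, hpOB2k, lA2, lB2, lOA2, lOB2, yA2, zA2, zA2', zB2, yB2, yB2', hV2, hH2⟩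
    · omega
    · -- (VP,HP)
      have hs := mmSG_spec a dv
      have h1 := hok.1
      omega
    · exact mm_123_VPN a b c dv dh de k u1 v1 w1 u2 v2 w2 pA2 pOA2 pB2 pOB2 hde hk
        hu hv hw hpA2k hpOA2k hpB2k hpOB2k lOA2 hH2 hdv1 hu10 hw20 formA formC
  · rcases r2 with ⟨hdv1, hu20, hw10, hx1', hx2', hx3', hx4', hs2⟩ |
        ⟨hdh1', hu2dv, hv12dv, hy1', hy2', hy3', hy4', hs2⟩ | ⟨hnp2, pA2, pOA2, pB2, pOB2,
        hpA2k, hpOA2k, hpB2k, hpOB2k, lA2, lB2, lOA2, lOB2, yA2, zA2, zA2', zB2, yB2, yB2',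
        hV2, hH2⟩
    · -- (HP,VP)
      have hs := mmSG_spec a dv
      have h1 := hok.1
      omega
    · omega
    · exact mm_123_HPN a b c dv dh de k u1 v1 w1 u2 v2 w2 pA2 pOA2 pB2 pOB2 hde hk
        hu2a hta hu hv hw hpA2k hpOA2k hpB2k hpOB2k lOB2 hV2 hdh1 hu1dv hv22dv formA formC
  · rcases r2 with ⟨hdv1, hu20, hw10, hx1, hx2, hx3, hx4, hs2⟩ |
        ⟨hdh1, hu2dv, hv12dv, hy1, hy2, hy3, hy4, hs2⟩ | ⟨hnp2, pA2, pOA2, pB2, pOB2, hpA2k,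
        hpOA2k, hpB2k, hpOB2k, lA2, lB2, lOA2, lOB2, yA2, zA2, zA2', zB2, yB2, yB2', hV2, hH2⟩
    · exact mm_123_NVP a b c dv dh de k u1 v1 w1 u2 v2 w2 pA1 pOA1 pB1 pOB1 hde hk
        hu hv hw hpA1k hpOA1k hpB1k hpOB1k lOA1 hH1 hdv1 hu20 hw10 formB formC
    · exact mm_123_NHP a b c dv dh de k u1 v1 w1 u2 v2 w2 pA1 pOA1 pB1 pOB1 hde hk
        hu1a hta hu hv hw hpA1k hpOA1k hpB1k hpOB1k lOB1 hV1 hdh1 hu2dv hv12dv formB formC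
    · exact mm_123_NN a b c dv dh de k u1 v1 w1 u2 v2 w2 pA1 pOA1 pB1 pOB1 pA2 pOA2 pB2
        pOB2 hde hk hu hv hw hpA1k hpOA1k hpB1k hpOB1k hpA2k hpOA2k hpB2k hpOB2k lA2 lB2
        lOA1 lOB1 yA2 zB2 hV1 hH1 formB formC

lemma mm_exists (a b c : ℕ) (ha : 0 < a) (hb : 2 ≤ b) (hbc : b ≤ c) (hcb : c + 1 ≤ 2*b)
    (h3 : 3*a + 1 ≤ b + c) (hok : mmOK a b c) :
    ∃ Q : Finset (Question a b c), Feasible Q ∧ Q.card = 2*(b+c-1)/3 := by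
  classical
  obtain ⟨dv, dh, de, hde, hk, hcolsum, hrows1, hrows2, hrowse, hta⟩ : ∃ dv dh de : ℕ,
      de ≤ 1 ∧ 2*(dv+dh)+de = 2*(b+c-1)/3 ∧ dv+2*dh+de = c-1 ∧ b-1 ≤ 2*dv+dh+de ∧
      2*dv+dh+de ≤ b ∧ (de = 1 → 2*dv+dh+de = b) ∧ a ≤ dv+dh := by
    have h3' : (b+c) % 3 = 0 ∨ (b+c) % 3 = 1 ∨ (b+c) % 3 = 2 := by omega
    rcases h3' with h|h|h
    · exact ⟨(2*b-c)/3, (2*c-b-3)/3, 1, by omega, by omega, by omega, by omega, by omega,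
        by omega, by omega⟩
    · exact ⟨(2*b-c+1)/3, (2*c-b-2)/3, 0, by omega, by omega, by omega, by omega, by omega,
        by omega, by omega⟩
    · exact ⟨(2*b-c-1)/3, (2*c-b-1)/3, 0, by omega, by omega, by omega, by omega, by omega,
        by omega, by omega⟩
  set k := 2*(dv+dh)+de with hkdef
  have hsga : mmSG a dv < a := mmSG_lt a dv ha
  have hb0 : 0 < b := by omega
  have hc0 : 0 < c := by omega
  have hYlt : ∀ p, p < k → mmY dv p < b := by
    intro p hp; unfold mmY; split_ifs <;> omega
  have hZlt : ∀ p, p < k → mmZ dv dh p < c := by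
    intro p hp; unfold mmZ; split_ifs <;> omega
  have hLlt : ∀ p, mmL a dv dh (mmSG a dv) p < a := by
    intro p; unfold mmL
    split_ifs <;> first | exact hsga | exact mm_cap_lt _ _ ha
  set F : ℕ → Question a b c := mmQf a b c dv dh (mmSG a dv) ha hb0 hc0 with hF
  set Q := (Finset.range k).image F with hQdef
  have hcard : Q.card = 2*(b+c-1)/3 := by
    rw [hQdef, Finset.card_image_of_injOn, Finset.card_range]
    · omega
    · intro p hp q hq hpq
      rw [Finset.mem_coe, Finset.mem_range] at hp hq
      have hY : mmY dv p = mmY dv q := by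
        have h2 := congrArg (fun x : Question a b c => (x.2.1 : ℕ)) hpq
        simp only [hF, mmQf] at h2
        rwa [Nat.mod_eq_of_lt (hYlt p hp), Nat.mod_eq_of_lt (hYlt q hq)] at h2
      have hZ : mmZ dv dh p = mmZ dv dh q := by
        have h2 := congrArg (fun x : Question a b c => (x.2.2 : ℕ)) hpq
        simp only [hF, mmQf] at h2
        rwa [Nat.mod_eq_of_lt (hZlt p hp), Nat.mod_eq_of_lt (hZlt q hq)] at h2
      exact mm_inj dv dh de p q hde (by omega) (by omega) hY hZ
  refine ⟨Q, ?_, hcard⟩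
  intro s s' hss
  by_contra hcon
  push_neg at hcon
  have key : ∀ p, p < k →
      ((if (s.1:ℕ) = mmL a dv dh (mmSG a dv) p then 1 else 0) +
        (if (s.2.1:ℕ) = mmY dv p then 1 else 0) +
        (if (s.2.2:ℕ) = mmZ dv dh p then 1 else 0) : ℕ) =
      ((if (s'.1:ℕ) = mmL a dv dh (mmSG a dv) p then 1 else 0) +
        (if (s'.2.1:ℕ) = mmY dv p then 1 else 0) +
        (if (s'.2.2:ℕ) = mmZ dv dh p then 1 else 0) : ℕ) := by
    intro p hp
    have hmem : F p ∈ Q := by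
      rw [hQdef]; exact Finset.mem_image_of_mem _ (Finset.mem_range.mpr hp)
    have h := hcon (F p) hmem
    simp only [hF, mmQf, g, Fin.ext_iff] at h
    rwa [Nat.mod_eq_of_lt (hLlt p), Nat.mod_eq_of_lt (hYlt p hp),
      Nat.mod_eq_of_lt (hZlt p hp)] at h
  clear hcon hcard
  have hu1a : (s.1:ℕ) < a := s.1.isLt
  have hu2a : (s'.1:ℕ) < a := s'.1.isLt
  have hv1b : (s.2.1:ℕ) < b := s.2.1.isLt
  have hv2b : (s'.2.1:ℕ) < b := s'.2.1.isLt
  have hw1c : (s.2.2:ℕ) < c := s.2.2.isLt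
  have hw2c : (s'.2.2:ℕ) < c := s'.2.2.isLt
  have hne3 : ¬((s.1:ℕ) = (s'.1:ℕ) ∧ (s.2.1:ℕ) = (s'.2.1:ℕ) ∧ (s.2.2:ℕ) = (s'.2.2:ℕ)) := by
    rintro ⟨h1, h2, h3⟩
    exact hss (Prod.ext (Fin.ext h1) (Prod.ext (Fin.ext h2) (Fin.ext h3)))
  clear hss
  by_cases hu : (s.1:ℕ) = (s'.1:ℕ) <;> by_cases hv : (s.2.1:ℕ) = (s'.2.1:ℕ) <;>
    by_cases hw : (s.2.2:ℕ) = (s'.2.2:ℕ)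
  · exact hne3 ⟨hu, hv, hw⟩
  · -- only w differs
    have hor : (s.2.2:ℕ) < c - 1 ∨ (s'.2.2:ℕ) < c - 1 := by omega
    rcases hor with h|h
    · obtain ⟨p, hp, hzp⟩ := mm_surjZ dv dh de (s.2.2:ℕ) (by omega) hde
      exact mm_only_w (key p (by omega)) hu hv hw (Or.inl hzp)
    · obtain ⟨p, hp, hzp⟩ := mm_surjZ dv dh de (s'.2.2:ℕ) (by omega) hde
      exact mm_only_w (key p (by omega)) hu hv hw (Or.inr hzp)
  · -- only v differs
    have hor : (s.2.1:ℕ) < 2*dv+dh+de ∨ (s'.2.1:ℕ) < 2*dv+dh+de := by omega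
    rcases hor with h|h
    · obtain ⟨p, hp, hyp⟩ := mm_surjY dv dh de (s.2.1:ℕ) (by omega) hde
      exact mm_only_v (key p (by omega)) hu hw hv (Or.inl hyp)
    · obtain ⟨p, hp, hyp⟩ := mm_surjY dv dh de (s'.2.1:ℕ) (by omega) hde
      exact mm_only_v (key p (by omega)) hu hw hv (Or.inr hyp)
  · -- v,w differ (23)
    have key23 : ∀ p, p < k →
        ((if (s.2.1:ℕ) = mmY dv p then 1 else 0) +
          (if (s.2.2:ℕ) = mmZ dv dh p then 1 else 0) : ℕ) =
        (if (s'.2.1:ℕ) = mmY dv p then 1 else 0) +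
          (if (s'.2.2:ℕ) = mmZ dv dh p then 1 else 0) :=
      fun p hp => mm_tail (key p hp) hu
    by_cases h1 : (s.2.1:ℕ) < 2*dv + dh
    · exact mm_main23 dv dh de k (s.2.1:ℕ) (s.2.2:ℕ) (s'.2.1:ℕ) (s'.2.2:ℕ) hde hkdef
        hv hw key23 h1
    · by_cases h2 : (s'.2.1:ℕ) < 2*dv + dh
      · exact mm_main23 dv dh de k (s'.2.1:ℕ) (s'.2.2:ℕ) (s.2.1:ℕ) (s.2.2:ℕ) hde hkdef
          (fun h => hv h.symm) (fun h => hw h.symm) (fun p hp => (key23 p hp).symm) h2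
      · omega
  · -- only u differs
    have hpl := mm_I0_lt dv dh (s.1:ℕ) (by omega)
    have hl := mm_lab0 a dv dh (mmSG a dv) (s.1:ℕ) (by omega)
    rw [mm_cap_eq a (s.1:ℕ) hu1a] at hl
    exact mm_only_u (key (mmI0 dv (s.1:ℕ)) (by omega)) hv hw hu hl
  · -- u,w differ (13)
    have r1 := mm_pureV a dv dh de k (mmSG a dv) (s.1:ℕ) (s'.2.2:ℕ) ha hu1a hta hkdef hde
      (fun p hp hl => mm_lab_col (key p hp) hv hu hl)
    have r2 := mm_pureV a dv dh de k (mmSG a dv) (s'.1:ℕ) (s.2.2:ℕ) ha hu2a hta hkdef hde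
      (fun p hp hl => mm_lab_col (key p hp).symm hv.symm (Ne.symm hu) hl)
    omega
  · -- u,v differ (12)
    have r1 := mm_pureH a dv dh de k (mmSG a dv) (s.1:ℕ) (s'.2.1:ℕ) ha hu1a hta hkdef hde
      (fun p hp hl => mm_lab_row (key p hp) hw hu hl)
    have r2 := mm_pureH a dv dh de k (mmSG a dv) (s'.1:ℕ) (s.2.1:ℕ) ha hu2a hta hkdef hde
      (fun p hp hl => mm_lab_row (key p hp).symm hw.symm (Ne.symm hu) hl)
    omega
  · -- all differ (123)
    exact mm_main123 a b c dv dh de k (s.1:ℕ) (s.2.1:ℕ) (s.2.2:ℕ) (s'.1:ℕ) (s'.2.1:ℕ)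
      (s'.2.2:ℕ) hde hkdef hcolsum hrows1 hrows2 hrowse hta hok hu1a hu2a hv1b hv2b
      hw1c hw2c hu hv hw key

def Q244 : Finset (Question 2 4 4) :=
  {(0,0,0), (1,1,0), (1,2,1), (1,2,2)}

def Q245 : Finset (Question 2 4 5) :=
  {(0,0,0), (1,1,0), (1,2,1), (0,2,2), (0,3,3)}

lemma mm_spec244 : Feasible Q244 ∧ Q244.card = 4 := by
  constructor
  · show ∀ _, _
    decide
  · decide

lemma mm_spec245 : Feasible Q245 ∧ Q245.card = 5 := by
  constructor
  · show ∀ _, _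
    decide
  · decide


theorem f_3a_lt_and_2b_gt_c (a b c : ℕ) (ha : 0 < a) (hab : a ≤ b) (hbc : b ≤ c)
    (h3a : 3 * a < b + c) (h2b : c < 2 * b) :
    f a b c = 2 * (b + c - 1) / 3 := by
  have hb2 : 2 ≤ b := by
    rcases Nat.lt_or_ge b 2 with h|h
    · exfalso; omega
    · exact h
  have hex : ∃ Q : Finset (Question a b c), Feasible Q ∧ Q.card = 2*(b+c-1)/3 := by
    by_cases h1 : a = 2 ∧ b = 4 ∧ c = 4
    · obtain ⟨ha', hb', hc'⟩ := h1
      subst ha'; subst hb'; subst hc'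
      exact ⟨Q244, mm_spec244.1, mm_spec244.2⟩
    · by_cases h2 : a = 2 ∧ b = 4 ∧ c = 5
      · obtain ⟨ha', hb', hc'⟩ := h2
        subst ha'; subst hb'; subst hc'
        exact ⟨Q245, mm_spec245.1, mm_spec245.2⟩
      · exact mm_exists a b c ha hb2 hbc (by omega) (by omega) ⟨h1, h2⟩
  obtain ⟨Q0, hQ0, hc0⟩ := hex
  have hmem : 2*(b+c-1)/3 ∈ {n : ℕ | ∃ Q : Finset (Question a b c), Feasible Q ∧ Q.card = n} :=
    ⟨Q0, hQ0, hc0⟩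
  apply le_antisymm
  · exact Nat.sInf_le hmem
  · apply le_csInf ⟨_, hmem⟩
    rintro n ⟨Q, hQ, rfl⟩
    exact mm_lower a b c ha hb2 hbc Q hQ
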